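/- If Δ is Buchsbaum and its contraction Γ is pure, then Γ is Buchsbaum. -/

import Mathlib

open Finset

/-- An abstract simplicial complex on vertex type `V`: a downward closed
family of finite subsets of `V`. -/
structure AbstractComplex (V : Type*) where
  faces : Set (Finset V)
  down_closed : ∀ {s t : Finset V}, s ∈ faces → t ⊆ s → t ∈ faces

namespace AbstractComplex

variable {V : Type*}

/-- A facet is a maximal face. -/
def IsFacet (Δ : AbstractComplex V) (s : Finset V) : Prop :=
  s ∈ Δ.faces ∧ ∀ t ∈ Δ.faces, s ⊆ t → s = t

/-- A complex is pure if all facets have the same cardinality. -/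
def IsPure (Δ : AbstractComplex V) : Prop :=
  ∀ s t : Finset V, Δ.IsFacet s → Δ.IsFacet t → s.card = t.card

/-- The link of a (potential) face `F`. -/
def link [DecidableEq V] (Δ : AbstractComplex V) (F : Finset V) : AbstractComplex V where
  faces := {G | G ∩ F = ∅ ∧ G ∪ F ∈ Δ.faces}
  down_closed := by
    rintro s t ⟨h1, h2⟩ hts
    refine ⟨subset_empty.mp ?_, Δ.down_closed h2 (union_subset_union hts subset_rfl)⟩
    exact h1 ▸ inter_subset_inter hts subset_rfl

/-- The faces of cardinality `q` (i.e. dimension `q - 1`). -/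
abbrev Face (Δ : AbstractComplex V) (q : ℕ) := {s : Finset V // s ∈ Δ.faces ∧ s.card = q}

/-- The simplicial boundary map on reduced chains with coefficients in `K`,
from chains spanned by faces of cardinality `q+1` to those spanned by faces of
cardinality `q`. -/
noncomputable def boundary (K : Type*) [Field K] [LinearOrder V]
    (Δ : AbstractComplex V) (q : ℕ) :
    (Δ.Face (q + 1) →₀ K) →ₗ[K] (Δ.Face q →₀ K) :=
  Finsupp.lsum K fun s => LinearMap.toSpanSingleton K _
    (∑ x ∈ s.1.attach,
      ((-1 : K) ^ (s.1.filter (fun y => y < x.1)).card) •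
        Finsupp.single (⟨s.1.erase x.1,
          Δ.down_closed s.2.1 (erase_subset _ _), by
            rw [card_erase_of_mem x.2, s.2.2]; omega⟩ : Δ.Face q) (1 : K))

/-- `Δ.RHTriv K i` says that the `i`-th reduced simplicial homology of `Δ`
with coefficients in `K` vanishes. -/
def RHTriv (K : Type*) [Field K] [LinearOrder V] (Δ : AbstractComplex V) : ℤ → Prop
  | Int.ofNat i =>
      LinearMap.ker (Δ.boundary K i) ≤ LinearMap.range (Δ.boundary K (i + 1))
  | Int.negSucc 0 => ⊤ ≤ LinearMap.range (Δ.boundary K 0)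
  | Int.negSucc (_ + 1) => True

/-- `Δ.dimLT i` means `i < dim Δ`. -/
def dimLT (Δ : AbstractComplex V) (i : ℤ) : Prop :=
  ∃ s ∈ Δ.faces, i + 2 ≤ (s.card : ℤ)

/-- Cohen–Macaulayness over `K`, via Reisner's criterion. -/
def IsCM (K : Type*) [Field K] [LinearOrder V] (Δ : AbstractComplex V) : Prop :=
  ∀ F ∈ Δ.faces, ∀ i : ℤ, (Δ.link F).dimLT i → (Δ.link F).RHTriv K i

/-- `CM_t`: pure, and the link of every face of cardinality at least `t`
is Cohen–Macaulay. -/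
def IsCMt (K : Type*) [Field K] [LinearOrder V] (t : ℕ) (Δ : AbstractComplex V) : Prop :=
  Δ.IsPure ∧ ∀ F ∈ Δ.faces, t ≤ F.card → IsCM K (Δ.link F)

/-- Buchsbaum-ness: pure and the reduced homology of the link of every nonempty
face vanishes below its dimension. -/
def IsBuchsbaum (K : Type*) [Field K] [LinearOrder V] (Δ : AbstractComplex V) : Prop :=
  Δ.IsPure ∧ ∀ G ∈ Δ.faces, G ≠ ∅ →
    ∀ i : ℤ, (Δ.link G).dimLT i → (Δ.link G).RHTriv K i

end AbstractComplex

/-- The expansion `F^α` of a finite vertex set. -/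
def expandSet {V : Type*} (α : V → ℕ) (F : Finset V) : Finset (Σ i, Fin (α i)) :=
  F.sigma fun _ => Finset.univ

namespace AbstractComplex

/-- The expansion `Δ^α` of a simplicial complex: the complex generated by the
expansions of the facets of `Δ`. -/
def expand {V : Type*} (Δ : AbstractComplex V) (α : V → ℕ) :
    AbstractComplex (Σ i, Fin (α i)) where
  faces := {σ | ∃ F, Δ.IsFacet F ∧ σ ⊆ expandSet α F}
  down_closed := fun ⟨F, hF, hsub⟩ hts => ⟨F, hF, hts.trans hsub⟩

end AbstractComplex

/-- A linear order on the expanded vertex set (lexicographic). -/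
noncomputable instance sigmaFinLinearOrder {V : Type*} [LinearOrder V] {α : V → ℕ} :
    LinearOrder (Σ i, Fin (α i)) :=
  LinearOrder.lift' (toLex : (Σ i, Fin (α i)) → Σₗ i, Fin (α i)) toLex.injective

namespace AbstractComplex

variable {V : Type*}

/-- Two vertices are equivalent iff they lie in exactly the same facets. -/
def contractSetoid (Δ : AbstractComplex V) : Setoid V where
  r x y := ∀ F : Finset V, Δ.IsFacet F → (x ∈ F ↔ y ∈ F)
  iseqv := ⟨fun _ _ _ => Iff.rfl, fun h F hF => (h F hF).symm,
    fun h1 h2 F hF => (h1 F hF).trans (h2 F hF)⟩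

/-- The contraction of `Δ`: the complex on the equivalence classes of vertices,
whose facets are the images of the facets of `Δ`. -/
def contraction (Δ : AbstractComplex V) : AbstractComplex (Quotient Δ.contractSetoid) where
  faces := {σ | ∃ F : Finset V, Δ.IsFacet F ∧
    ∀ y ∈ σ, ∃ x ∈ F, Quotient.mk Δ.contractSetoid x = y}
  down_closed := fun ⟨F, hF, h⟩ hts => ⟨F, hF, fun y hy => h y (hts hy)⟩

/-- The size of an equivalence class of vertices: the components of the vector
obtained from contraction. -/
noncomputable def classSize (Δ : AbstractComplex V) (y : Quotient Δ.contractSetoid) : ℕ :=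
  Nat.card {x : V // Quotient.mk Δ.contractSetoid x = y}

end AbstractComplex

noncomputable instance quotLinearOrder {V : Type*} [LinearOrder V] {s : Setoid V} :
    LinearOrder (Quotient s) :=
  LinearOrder.lift' Quotient.out Quotient.out_injective

namespace ContractionAux

open Finset AbstractComplex

variable {V : Type*} {W : Type*} [LinearOrder V] [LinearOrder W]

/-- Number of inversions of `f` on `s`. -/
def inv (f : V → W) (s : Finset V) : ℕ :=
  ((s ×ˢ s).filter fun p => p.1 < p.2 ∧ f p.2 < f p.1).card

theorem inv_eq_sum (f : V → W) (s : Finset V) :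
    inv f s = ∑ a ∈ s, ∑ b ∈ s, (if a < b ∧ f b < f a then 1 else 0) := by
  rw [inv, card_filter, sum_product]

theorem inv_erase (f : V → W) {s : Finset V} {x : V} (hx : x ∈ s) :
    inv f s = inv f (s.erase x) + (s.filter fun y => y < x ∧ f x < f y).card
      + (s.filter fun y => x < y ∧ f y < f x).card := by
  rw [inv_eq_sum, inv_eq_sum, ← Finset.add_sum_erase _ _ hx]
  have h1 : ∀ a ∈ s.erase x, (∑ b ∈ s, (if a < b ∧ f b < f a then 1 else 0)) =
      (if a < x ∧ f x < f a then 1 else 0) +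
        ∑ b ∈ s.erase x, (if a < b ∧ f b < f a then 1 else 0) := by
    intro a _
    rw [← Finset.add_sum_erase _ _ hx]
  rw [Finset.sum_congr rfl h1, Finset.sum_add_distrib, card_filter, card_filter]
  have h3 : ∑ y ∈ s, (if y < x ∧ f x < f y then 1 else 0) =
      ∑ y ∈ s.erase x, (if y < x ∧ f x < f y then 1 else 0) := by
    rw [Finset.sum_erase]
    simp
  omega

end ContractionAux
namespace ContractionAux
open Finset
variable {V : Type*} {W : Type*} [LinearOrder V] [LinearOrder W]

theorem parityA (f : V → W) {s : Finset V} (hinj : Set.InjOn f s) {x : V} (hx : x ∈ s) :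
    (inv f s + ((s.image f).filter (fun w => w < f x)).card) % 2
      = ((s.filter (fun y => y < x)).card + inv f (s.erase x)) % 2 := by
  have hB : ((s.image f).filter (fun w => w < f x)).card
      = (s.filter fun y => f y < f x).card := by
    rw [Finset.filter_image]
    exact card_image_of_injOn (hinj.mono (by intro a ha; simp at ha ⊢; exact ha.1))
  have hAB : (s.filter (fun y => y < x)).card + (s.filter fun y => f y < f x).card
      = 2 * (s.filter fun y => y < x ∧ f y < f x).card
        + ((s.filter fun y => y < x ∧ f x < f y).card
        + (s.filter fun y => x < y ∧ f y < f x).card) := by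
    simp only [card_filter, Finset.mul_sum, ← Finset.sum_add_distrib]
    refine Finset.sum_congr rfl (fun y hy => ?_)
    by_cases hyx : y = x
    · subst hyx; simp
    · have hne : f y ≠ f x := fun h => hyx (hinj hy hx h)
      rcases lt_or_gt_of_ne hyx with h1 | h1 <;> rcases lt_or_gt_of_ne hne with h2 | h2 <;>
        simp [h1, h2, h1.asymm, h2.asymm]
  have := inv_erase f hx
  omega

end ContractionAux
namespace ContractionAux
open Finset
variable {V : Type*} {W : Type*} [LinearOrder V] [LinearOrder W]

theorem card_filter_erase {s : Finset V} {u : V} (p : V → Prop) [DecidablePred p]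
    (hpu : ¬ p u) : ((s.erase u).filter p).card = (s.filter p).card := by
  rw [Finset.filter_erase, Finset.erase_eq_of_notMem (by simp [hpu])]

theorem parityB (f : V → W) {s : Finset V} {u v : V} (hu : u ∈ s) (hv : v ∈ s)
    (huv : u < v) (hfuv : f u = f v)
    (hfib : ∀ y ∈ s, y ≠ u → y ≠ v → f y ≠ f u) :
    ((s.filter (fun y => y < v)).card + inv f (s.erase v)) % 2
      = ((s.filter (fun y => y < u)).card + inv f (s.erase u) + 1) % 2 := by
  have hvu : v ∈ s.erase u := Finset.mem_erase.mpr ⟨huv.ne', hv⟩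
  have huv' : u ∈ s.erase v := Finset.mem_erase.mpr ⟨huv.ne, hu⟩
  -- (a)
  have ha := inv_erase f hvu
  have hb := inv_erase f huv'
  rw [Finset.erase_right_comm] at hb
  rw [card_filter_erase (fun y => y < v ∧ f v < f y) (by simp [← hfuv]),
    card_filter_erase (fun y => v < y ∧ f y < f v) (by simp [huv.asymm])] at ha
  rw [card_filter_erase (fun y => y < u ∧ f u < f y) (by simp [huv.asymm]),
    card_filter_erase (fun y => u < y ∧ f y < f u) (by simp [hfuv])] at hb
  -- (c)
  have hc : (s.filter (fun y => y < v)).card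
      = (s.filter (fun y => y < u)).card + (s.filter fun y => u < y ∧ y < v).card + 1 := by
    have hM : (s.filter (fun y => y < v)).card
        = (s.filter (fun y => y < u)).card + (s.filter fun y => u ≤ y ∧ y < v).card := by
      simp only [card_filter, ← Finset.sum_add_distrib]
      refine Finset.sum_congr rfl (fun y _ => ?_)
      rcases lt_trichotomy y u with h | h | h
      · simp [h, h.trans huv, h.asymm, h.not_ge]
      · simp [h, huv, lt_irrefl]
      · by_cases h' : y < v <;> simp [h, h', h.asymm, h.le]
    have hM2 : s.filter (fun y => u ≤ y ∧ y < v) = insert u (s.filter fun y => u < y ∧ y < v) := by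
      ext y
      simp only [Finset.mem_filter, Finset.mem_insert]
      constructor
      · rintro ⟨hy, h1, h2⟩
        rcases eq_or_lt_of_le h1 with h | h
        · exact Or.inl h.symm
        · exact Or.inr ⟨hy, h, h2⟩
      · rintro (rfl | ⟨hy, h1, h2⟩)
        · exact ⟨hu, le_refl _, huv⟩
        · exact ⟨hy, h1.le, h2⟩
    rw [hM, hM2, Finset.card_insert_of_notMem (by simp)]
    omega
  -- (d)
  have hd : Even ((s.filter fun y => y < v ∧ f v < f y).card
      + (s.filter fun y => v < y ∧ f y < f v).card
      + (s.filter fun y => y < u ∧ f u < f y).card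
      + (s.filter fun y => u < y ∧ f y < f u).card
      + (s.filter fun y => u < y ∧ y < v).card) := by
    simp only [card_filter, ← Finset.sum_add_distrib]
    refine Finset.even_sum _ (fun y hy => ?_)
    by_cases hyu : y = u
    · subst hyu; simp [huv, huv.asymm, hfuv, lt_irrefl]
    by_cases hyv : y = v
    · subst hyv; simp [huv, huv.asymm, ← hfuv, lt_irrefl]
    have hfy : f y ≠ f u := hfib y hy hyu hyv
    rcases lt_trichotomy y u with h | h | h
    · have hYv : y < v := h.trans huv
      rcases lt_or_gt_of_ne hfy with h2 | h2
      · simp [h, hYv, h.asymm, hYv.asymm, h2, ← hfuv, h2.asymm]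
      · simp only [hfuv] at h2 hfy
        simp [h, hYv, h.asymm, hYv.asymm, h2, h2.asymm, ← hfuv]
    · exact absurd h hyu
    rcases lt_trichotomy y v with h' | h' | h'
    · rcases lt_or_gt_of_ne hfy with h2 | h2
      · simp [h, h', h.asymm, h'.asymm, h2, ← hfuv, h2.asymm]
      · simp [h, h', h.asymm, h'.asymm, h2, h2.asymm, ← hfuv]
    · exact absurd h' hyv
    · rcases lt_or_gt_of_ne hfy with h2 | h2
      · simp [h, h', h.asymm, h'.asymm, h2, ← hfuv, h2.asymm]
      · simp [h, h', h.asymm, h'.asymm, h2, h2.asymm, ← hfuv]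
  obtain ⟨r, hr⟩ := hd
  omega

end ContractionAux
namespace ContractionAux
open Finset
variable {V : Type*} {W : Type*} [LinearOrder V] [LinearOrder W]

theorem image_erase_of_injOn {f : V → W} {s : Finset V} (hinj : Set.InjOn f s)
    {x : V} (hx : x ∈ s) : (s.erase x).image f = (s.image f).erase (f x) := by
  ext w
  simp only [Finset.mem_image, Finset.mem_erase]
  constructor
  · rintro ⟨y, ⟨hyx, hys⟩, rfl⟩
    exact ⟨fun h => hyx (hinj hys hx h), y, hys, rfl⟩
  · rintro ⟨hw, y, hy, rfl⟩
    exact ⟨y, ⟨fun h => hw (by rw [h]), hy⟩, rfl⟩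

theorem image_erase_of_collision {f : V → W} {t : Finset V} {u v : V} (hu : u ∈ t)
    (huv : u ≠ v) (hfuv : f u = f v) : (t.erase v).image f = t.image f := by
  refine subset_antisymm (Finset.image_subset_image (Finset.erase_subset _ _)) ?_
  intro w hw
  obtain ⟨y, hy, rfl⟩ := Finset.mem_image.mp hw
  by_cases hyv : y = v
  · subst hyv
    exact Finset.mem_image.mpr ⟨u, Finset.mem_erase.mpr ⟨huv, hu⟩, hfuv⟩
  · exact Finset.mem_image.mpr ⟨y, Finset.mem_erase.mpr ⟨hyv, hy⟩, rfl⟩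

theorem exists_collision {f : V → W} {s : Finset V}
    (h : (s.image f).card + 1 = s.card) :
    ∃ u ∈ s, ∃ v ∈ s, u < v ∧ f u = f v ∧
      ∀ y ∈ s, y ≠ u → y ≠ v → f y ≠ f u := by
  have hni : ¬ Set.InjOn f s := by
    intro hinj
    rw [Finset.card_image_of_injOn hinj] at h
    omega
  rw [Set.InjOn] at hni
  push_neg at hni
  obtain ⟨a, ha, b, hb, hne, hab⟩ := hni
  -- here hne : f a = f b, hab : a ≠ b
  have key : ∀ u ∈ s, ∀ v ∈ s, u ≠ v → f u = f v →
      ∀ y ∈ s, y ≠ u → y ≠ v → f y ≠ f u := by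
    intro u hus v hvs huv hfuv y hy hyu hyv hfy
    have h1 : (s.erase v).image f = s.image f := image_erase_of_collision hus huv hfuv
    have h2 : ((s.erase v).erase y).image f = (s.erase v).image f :=
      image_erase_of_collision (t := s.erase v) (Finset.mem_erase.mpr ⟨huv, hus⟩)
        (Ne.symm hyu) hfy.symm
    have h3 := Finset.card_image_le (s := (s.erase v).erase y) (f := f)
    rw [h2, h1] at h3
    rw [Finset.card_erase_of_mem (Finset.mem_erase.mpr ⟨hyv, hy⟩),
      Finset.card_erase_of_mem hvs] at h3
    have hpos : 1 < s.card := Finset.one_lt_card.mpr ⟨u, hus, v, hvs, huv⟩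
    omega
  rcases lt_or_gt_of_ne hab with h1 | h1
  · exact ⟨a, ha, b, hb, h1, hne, key a ha b hb hab hne⟩
  · exact ⟨b, hb, a, ha, h1, hne.symm, key b hb a ha (Ne.symm hab) hne.symm⟩

end ContractionAux
namespace ContractionAux

open Finset AbstractComplex

variable {V : Type*} {W : Type*} [LinearOrder V] [LinearOrder W]

/-- The chain map induced by a simplicial vertex map. -/
noncomputable def cmap (K : Type*) [Field K] (Δ : AbstractComplex V) (Δ' : AbstractComplex W)
    (f : V → W) (hf : ∀ σ ∈ Δ.faces, σ.image f ∈ Δ'.faces) (q : ℕ) :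
    (Δ.Face q →₀ K) →ₗ[K] (Δ'.Face q →₀ K) :=
  Finsupp.lsum K fun σ => LinearMap.toSpanSingleton K _
    (if h : (σ.1.image f).card = q then
      ((-1 : K) ^ inv f σ.1) • Finsupp.single (⟨σ.1.image f, hf _ σ.2.1, h⟩ : Δ'.Face q) 1
     else 0)

theorem cmap_single {K : Type*} [Field K] {Δ : AbstractComplex V} {Δ' : AbstractComplex W}
    {f : V → W} (hf : ∀ σ ∈ Δ.faces, σ.image f ∈ Δ'.faces) {q : ℕ} (σ : Δ.Face q) :
    cmap K Δ Δ' f hf q (Finsupp.single σ 1) =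
    (if h : (σ.1.image f).card = q then
      ((-1 : K) ^ inv f σ.1) • Finsupp.single (⟨σ.1.image f, hf _ σ.2.1, h⟩ : Δ'.Face q) 1
     else 0) := by
  simp [cmap]

theorem boundary_single {K : Type*} [Field K] {Δ : AbstractComplex V} {q : ℕ}
    (σ : Δ.Face (q + 1)) :
    Δ.boundary K q (Finsupp.single σ 1) =
    ∑ x ∈ σ.1.attach,
      ((-1 : K) ^ (σ.1.filter (fun y => y < x.1)).card) •
        Finsupp.single (⟨σ.1.erase x.1,
          Δ.down_closed σ.2.1 (erase_subset _ _), by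
            rw [card_erase_of_mem x.2, σ.2.2]; omega⟩ : Δ.Face q) (1 : K) := by
  simp [AbstractComplex.boundary]

end ContractionAux
namespace ContractionAux
open Finset AbstractComplex
variable {V : Type*} {W : Type*} [LinearOrder V] [LinearOrder W]

theorem neg_one_pow_congr {K : Type*} [Ring K] {a b : ℕ} (h : a % 2 = b % 2) :
    (-1 : K) ^ a = (-1 : K) ^ b := by
  rw [neg_one_pow_eq_pow_mod_two, h, ← neg_one_pow_eq_pow_mod_two]

theorem cmap_comm (K : Type*) [Field K] (Δ : AbstractComplex V) (Δ' : AbstractComplex W)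
    (f : V → W) (hf : ∀ σ ∈ Δ.faces, σ.image f ∈ Δ'.faces) (q : ℕ) :
    (Δ'.boundary K q).comp (cmap K Δ Δ' f hf (q + 1))
      = (cmap K Δ Δ' f hf q).comp (Δ.boundary K q) := by
  refine Finsupp.lhom_ext' (fun σ => LinearMap.ext_ring ?_)
  simp only [LinearMap.comp_apply, Finsupp.lsingle_apply]
  rw [cmap_single, boundary_single]
  have hcard : σ.1.card = q + 1 := σ.2.2
  rw [map_sum]
  simp only [map_smul, cmap_single]
  by_cases hA : (σ.1.image f).card = q + 1
  · -- injective case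
    rw [dif_pos hA, map_smul, boundary_single]
    have hface : ((⟨σ.1.image f, hf _ σ.2.1, hA⟩ : Δ'.Face (q+1)) : Finset W)
        = σ.1.image f := rfl
    simp only [hface]
    have hinj : Set.InjOn f ↑σ.1 :=
      Finset.injOn_of_card_image_eq (by rw [hA, hcard])
    have hre : ∑ z ∈ (σ.1.image f).attach,
        ((-1 : K) ^ ((σ.1.image f).filter (fun y => y < z.1)).card) •
          Finsupp.single ((⟨(σ.1.image f).erase z.1,
            Δ'.down_closed (hf _ σ.2.1) (Finset.erase_subset _ _),
            by rw [Finset.card_erase_of_mem z.2, hA]; omega⟩ : Δ'.Face q)) (1 : K)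
        = ∑ x ∈ σ.1.attach,
        ((-1 : K) ^ ((σ.1.image f).filter (fun y => y < f x.1)).card) •
          Finsupp.single ((⟨(σ.1.image f).erase (f x.1),
            Δ'.down_closed (hf _ σ.2.1) (Finset.erase_subset _ _),
            by rw [Finset.card_erase_of_mem (Finset.mem_image_of_mem f x.2), hA]; omega⟩ :
              Δ'.Face q)) (1 : K) := by
      refine (Finset.sum_bij (fun x _ => (⟨f x.1, Finset.mem_image_of_mem f x.2⟩ :
          {w // w ∈ σ.1.image f})) (fun x _ => Finset.mem_attach _ _)
        (fun a _ b _ hab => ?_) (fun z _ => ?_) (fun x _ => rfl)).symm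
      · exact Subtype.ext (hinj a.2 b.2 (congrArg Subtype.val hab))
      · obtain ⟨y, hy, hyz⟩ := Finset.mem_image.mp z.2
        exact ⟨⟨y, hy⟩, Finset.mem_attach _ _, Subtype.ext hyz⟩
    rw [hre, Finset.smul_sum]
    refine Finset.sum_congr rfl (fun x _ => ?_)
    have hcx : ((σ.1.erase x.1).image f).card = q := by
      rw [Finset.card_image_of_injOn (hinj.mono (fun a ha => Finset.mem_coe.mpr ((Finset.mem_erase.mp (Finset.mem_coe.mp ha)).2))),
        Finset.card_erase_of_mem x.2, hcard]
      omega
    rw [dif_pos hcx, smul_smul, smul_smul]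
    congr 1
    · rw [← pow_add, ← pow_add]
      exact neg_one_pow_congr (parityA f hinj x.2)
    · exact congrArg (fun t => Finsupp.single t (1:K))
        (Subtype.ext (image_erase_of_injOn hinj x.2).symm)
  · rw [dif_neg hA, map_zero]
    by_cases hB : (σ.1.image f).card = q
    · -- one collision pair
      obtain ⟨u, hu, v, hv, huv, hfuv, hfib⟩ :=
        exists_collision (f := f) (s := σ.1) (by rw [hB, hcard])
      have hq1 : 1 ≤ q := by
        have : 0 < (σ.1.image f).card :=
          Finset.card_pos.mpr ⟨f u, Finset.mem_image_of_mem f hu⟩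
        omega
      have hiu : (σ.1.erase u).image f = σ.1.image f :=
        image_erase_of_collision hv huv.ne' hfuv.symm
      have hiv : (σ.1.erase v).image f = σ.1.image f :=
        image_erase_of_collision hu huv.ne hfuv
      have hterm : ∀ x ∈ σ.1.attach,
          (((-1 : K) ^ (σ.1.filter (fun y => y < x.1)).card) •
            (if h : ((σ.1.erase x.1).image f).card = q then
              ((-1 : K) ^ inv f (σ.1.erase x.1)) •
                Finsupp.single (⟨(σ.1.erase x.1).image f,
                  hf _ (Δ.down_closed σ.2.1 (Finset.erase_subset _ _)), h⟩ : Δ'.Face q) (1:K)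
             else 0))
          = (if x.1 = u ∨ x.1 = v then
              ((-1 : K) ^ ((σ.1.filter (fun y => y < x.1)).card + inv f (σ.1.erase x.1))) •
                Finsupp.single (⟨σ.1.image f, hf _ σ.2.1, hB⟩ : Δ'.Face q) (1:K)
             else 0) := by
        intro x _
        by_cases hx : x.1 = u ∨ x.1 = v
        · rw [if_pos hx]
          have himg : (σ.1.erase x.1).image f = σ.1.image f := by
            rcases hx with h | h
            · rw [h, hiu]
            · rw [h, hiv]
          have hcx : ((σ.1.erase x.1).image f).card = q := by rw [himg, hB]
          rw [dif_pos hcx, smul_smul, ← pow_add]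
          exact congrArg _ (congrArg (fun t => Finsupp.single t (1:K)) (Subtype.ext himg))
        · rw [if_neg hx]
          push_neg at hx
          have hmem : u ∈ σ.1.erase x.1 := Finset.mem_erase.mpr ⟨(Ne.symm hx.1), hu⟩
          have himg : ((σ.1.erase x.1).erase v).image f = (σ.1.erase x.1).image f :=
            image_erase_of_collision hmem huv.ne hfuv
          have hne : ((σ.1.erase x.1).image f).card ≠ q := by
            have h1 := Finset.card_image_le (s := (σ.1.erase x.1).erase v) (f := f)
            rw [himg] at h1
            have h2 : v ∈ σ.1.erase x.1 := Finset.mem_erase.mpr ⟨(Ne.symm hx.2), hv⟩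
            rw [Finset.card_erase_of_mem h2, Finset.card_erase_of_mem x.2, hcard] at h1
            omega
          rw [dif_neg hne, smul_zero]
      rw [Finset.sum_congr rfl hterm, ← Finset.sum_filter]
      have hfilter : σ.1.attach.filter (fun x => x.1 = u ∨ x.1 = v)
          = {(⟨u, hu⟩ : {y // y ∈ σ.1}), ⟨v, hv⟩} := by
        ext x
        simp [Subtype.ext_iff]
      rw [hfilter, Finset.sum_pair (by simp [Subtype.ext_iff, huv.ne])]
      rw [← add_smul]
      have hpar := parityB f hu hv huv hfuv hfib
      have hcoef : ((-1 : K) ^ ((σ.1.filter (fun y => y < u)).card + inv f (σ.1.erase u)))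
          + ((-1 : K) ^ ((σ.1.filter (fun y => y < v)).card + inv f (σ.1.erase v))) = 0 := by
        rw [neg_one_pow_eq_pow_mod_two
            ((σ.1.filter (fun y => y < v)).card + inv f (σ.1.erase v)), hpar,
          ← neg_one_pow_eq_pow_mod_two, pow_succ]
        ring
      rw [show ((σ.1.filter (fun y => y < ((⟨u, hu⟩ : {y // y ∈ σ.1}) : V))).card)
          = (σ.1.filter (fun y => y < u)).card from rfl]
      rw [show ((σ.1.filter (fun y => y < ((⟨v, hv⟩ : {y // y ∈ σ.1}) : V))).card)
          = (σ.1.filter (fun y => y < v)).card from rfl]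
      rw [show inv f (σ.1.erase ((⟨u, hu⟩ : {y // y ∈ σ.1}) : V)) = inv f (σ.1.erase u) from rfl]
      rw [show inv f (σ.1.erase ((⟨v, hv⟩ : {y // y ∈ σ.1}) : V)) = inv f (σ.1.erase v) from rfl]
      rw [hcoef, zero_smul]
    · -- image too small
      symm
      refine Finset.sum_eq_zero (fun x _ => ?_)
      have hne : ((σ.1.erase x.1).image f).card ≠ q := by
        intro hq
        have h5 : q ≤ (σ.1.image f).card :=
          le_trans (le_of_eq hq.symm)
            (Finset.card_le_card (Finset.image_subset_image (Finset.erase_subset _ _)))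
        have h6 : (σ.1.image f).card ≤ q + 1 := by
          have hsub : σ.1.image f ⊆ insert (f x.1) ((σ.1.erase x.1).image f) := by
            intro w hw
            obtain ⟨y, hy, rfl⟩ := Finset.mem_image.mp hw
            by_cases hyx : y = x.1
            · subst hyx; exact Finset.mem_insert_self _ _
            · exact Finset.mem_insert_of_mem
                (Finset.mem_image_of_mem f (Finset.mem_erase.mpr ⟨hyx, hy⟩))
          calc (σ.1.image f).card ≤ _ := Finset.card_le_card hsub
            _ ≤ ((σ.1.erase x.1).image f).card + 1 := Finset.card_insert_le _ _
            _ = q + 1 := by rw [hq]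
        omega
      rw [dif_neg hne, smul_zero]

end ContractionAux
namespace ContractionAux
open Finset AbstractComplex

theorem out_lt_out {V : Type*} [LinearOrder V] {s : Setoid V} {a b : Quotient s} :
    @LT.lt (Quotient s) (quotLinearOrder (s := s)).toLT a b ↔ a.out < b.out := by
  constructor
  · intro h
    rcases lt_trichotomy a.out b.out with h' | h' | h'
    · exact h'
    · exact absurd h' (ne_of_lt (show a.out < b.out from h))
    · exact absurd h' (not_lt_of_gt (show a.out < b.out from h))
  · intro h
    rcases lt_trichotomy a b with h' | h' | h'
    · exact h'
    · exact absurd h (by rw [h']; exact lt_irrefl _)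
    · exact absurd (lt_iff_le_not_ge.mp h').1 (not_le_of_gt h)

theorem exists_facet {V : Type*} [Fintype V] (Δ : AbstractComplex V) (s : Finset V)
    (hs : s ∈ Δ.faces) : ∃ F, Δ.IsFacet F ∧ s ⊆ F := by
  classical
  obtain ⟨F, hF, hmax⟩ := Finset.exists_max_image
    (Finset.univ.filter fun t => t ∈ Δ.faces ∧ s ⊆ t) Finset.card ⟨s, by simp [hs]⟩
  simp only [Finset.mem_filter, Finset.mem_univ, true_and] at hF hmax
  refine ⟨F, ⟨hF.1, fun t ht hsub => ?_⟩, hF.2⟩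
  exact Finset.eq_of_subset_of_card_le hsub (hmax t ⟨ht, hF.2.trans hsub⟩)

end ContractionAux
namespace ContractionAux
open Finset AbstractComplex

theorem inv_out_eq_zero {V : Type*} [LinearOrder V] {s : Setoid V}
    (σ : Finset (Quotient s)) : inv (Quotient.out : Quotient s → V) σ = 0 := by
  rw [inv, Finset.card_eq_zero, Finset.filter_eq_empty_iff]
  rintro ⟨a, b⟩ _ ⟨h1, h2⟩
  exact absurd (out_lt_out.mpr h2) (not_lt_of_gt h1)

theorem inv_mk_out_eq_zero {V : Type*} [LinearOrder V] {s : Setoid V}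
    (σ : Finset (Quotient s)) :
    inv (Quotient.mk s : V → Quotient s) (σ.image Quotient.out) = 0 := by
  rw [inv, Finset.card_eq_zero, Finset.filter_eq_empty_iff]
  rintro ⟨a, b⟩ hab ⟨h1, h2⟩
  simp only [Finset.mem_product, Finset.mem_image] at hab
  obtain ⟨⟨aa, haa, rfl⟩, ⟨bb, hbb, rfl⟩⟩ := hab
  rw [Quotient.out_eq, Quotient.out_eq] at h2
  exact absurd (out_lt_out.mp h2) (not_lt_of_gt h1)

theorem cmap_out_retract {K : Type*} [Field K] {V : Type*} [LinearOrder V]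
    {s : Setoid V} (Δ₁ : AbstractComplex (Quotient s)) (Δ₂ : AbstractComplex V)
    (hout : ∀ σ ∈ Δ₁.faces, σ.image Quotient.out ∈ Δ₂.faces)
    (hmk : ∀ σ ∈ Δ₂.faces, σ.image (Quotient.mk s) ∈ Δ₁.faces) (q : ℕ) :
    (cmap K Δ₂ Δ₁ (Quotient.mk s) hmk q).comp (cmap K Δ₁ Δ₂ Quotient.out hout q)
      = LinearMap.id := by
  refine Finsupp.lhom_ext' (fun σ => LinearMap.ext_ring ?_)
  simp only [LinearMap.comp_apply, Finsupp.lsingle_apply, LinearMap.id_apply]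
  rw [cmap_single]
  have h1 : (σ.1.image (Quotient.out : Quotient s → V)).card = q := by
    rw [Finset.card_image_of_injective _ Quotient.out_injective, σ.2.2]
  rw [dif_pos h1, inv_out_eq_zero, pow_zero, one_smul, cmap_single]
  have himg : (σ.1.image (Quotient.out : Quotient s → V)).image (Quotient.mk s) = σ.1 := by
    rw [Finset.image_image]
    have : (Quotient.mk s : V → Quotient s) ∘ (Quotient.out : Quotient s → V) = id := by
      funext a
      exact Quotient.out_eq a
    rw [this, Finset.image_id]
  have h2 : ((σ.1.image (Quotient.out : Quotient s → V)).image (Quotient.mk s)).card = q := by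
    rw [himg, σ.2.2]
  rw [dif_pos h2, inv_mk_out_eq_zero, pow_zero, one_smul]
  exact congrArg (fun t => Finsupp.single t (1 : K)) (Subtype.ext himg)

end ContractionAux
/-- if `Δ` is Buchsbaum and its contraction `Γ` is pure,
then `Γ` is Buchsbaum. -/
theorem contraction_buchsbaum (K : Type*) [Field K] {V : Type*} [Fintype V]
    [LinearOrder V] (Δ : AbstractComplex V) (hΔ : AbstractComplex.IsBuchsbaum K Δ)
    (hpure : Δ.contraction.IsPure) :
    AbstractComplex.IsBuchsbaum K Δ.contraction := by
  refine ⟨hpure, ?_⟩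
  intro Gb hGb hGbne i hdim
  letI dpred : DecidablePred (fun x : V => Quotient.mk Δ.contractSetoid x ∈ Gb) :=
    fun _ => Classical.propDecidable _
  set G : Finset V :=
    Finset.univ.filter (fun x => (Quotient.mk Δ.contractSetoid x) ∈ Gb) with hGdef
  have hGmem : ∀ x : V, x ∈ G ↔ Quotient.mk Δ.contractSetoid x ∈ Gb := by
    intro x; simp [hGdef]
  have hclass : ∀ {x y : V}, Quotient.mk Δ.contractSetoid x = Quotient.mk Δ.contractSetoid y →
      ∀ {F : Finset V}, Δ.IsFacet F → (x ∈ F ↔ y ∈ F) := by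
    intro x y hxy F hF
    exact (Quotient.eq.mp hxy) F hF
  obtain ⟨F0, hF0, hrep⟩ := hGb
  have hGF0 : G ⊆ F0 := by
    intro x hx
    obtain ⟨x', hx', hq⟩ := hrep _ ((hGmem x).mp hx)
    exact (hclass hq hF0).mp hx'
  have hGface : G ∈ Δ.faces := Δ.down_closed hF0.1 hGF0
  have hGne : G ≠ ∅ := by
    obtain ⟨yb, hyb⟩ := Finset.nonempty_iff_ne_empty.mpr hGbne
    have hmem : yb.out ∈ G := (hGmem _).mpr (by rw [Quotient.out_eq]; exact hyb)
    intro h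
    rw [h] at hmem
    exact absurd hmem (Finset.notMem_empty _)
  -- the two vertex maps are simplicial
  have hout : ∀ σ ∈ (Δ.contraction.link Gb).faces,
      σ.image (Quotient.out : Quotient Δ.contractSetoid → V) ∈ (Δ.link G).faces := by
    rintro σ ⟨hdisj, hface⟩
    constructor
    · rw [Finset.eq_empty_iff_forall_notMem]
      intro x hx
      obtain ⟨hx1, hx2⟩ := Finset.mem_inter.mp hx
      obtain ⟨a, ha, rfl⟩ := Finset.mem_image.mp hx1
      have : a ∈ σ ∩ Gb := Finset.mem_inter.mpr
        ⟨ha, by rw [← Quotient.out_eq a]; exact (hGmem _).mp hx2⟩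
      rw [hdisj] at this
      exact absurd this (Finset.notMem_empty _)
    · obtain ⟨F, hF, hrep2⟩ := hface
      refine Δ.down_closed hF.1 (Finset.union_subset ?_ ?_)
      · intro x hx
        obtain ⟨a, ha, rfl⟩ := Finset.mem_image.mp hx
        obtain ⟨x', hx', hq⟩ := hrep2 a (Finset.mem_union_left _ ha)
        exact (hclass (by rw [hq, Quotient.out_eq]) hF).mp hx'
      · intro x hx
        obtain ⟨x', hx', hq⟩ := hrep2 _ (Finset.mem_union_right _ ((hGmem x).mp hx))
        exact (hclass hq hF).mp hx'
  have hmk : ∀ σ ∈ (Δ.link G).faces,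
      σ.image (Quotient.mk Δ.contractSetoid) ∈ (Δ.contraction.link Gb).faces := by
    rintro σ ⟨hdisj, hface⟩
    constructor
    · rw [Finset.eq_empty_iff_forall_notMem]
      intro yb hyb
      obtain ⟨h1, h2⟩ := Finset.mem_inter.mp hyb
      obtain ⟨x, hx, rfl⟩ := Finset.mem_image.mp h1
      have : x ∈ σ ∩ G := Finset.mem_inter.mpr ⟨hx, (hGmem x).mpr h2⟩
      rw [hdisj] at this
      exact absurd this (Finset.notMem_empty _)
    · obtain ⟨F, hF, hFsub⟩ := ContractionAux.exists_facet Δ _ hface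
      refine ⟨F, hF, ?_⟩
      intro yb hyb
      rcases Finset.mem_union.mp hyb with h | h
      · obtain ⟨x, hx, rfl⟩ := Finset.mem_image.mp h
        exact ⟨x, hFsub (Finset.mem_union_left _ hx), rfl⟩
      · exact ⟨yb.out, hFsub (Finset.mem_union_right _
          ((hGmem _).mpr (by rw [Quotient.out_eq]; exact h))), Quotient.out_eq _⟩
  -- the chain maps
  have hcommS := fun q => ContractionAux.cmap_comm K (Δ.contraction.link Gb) (Δ.link G)
    (Quotient.out : Quotient Δ.contractSetoid → V) hout q
  have hcommR := fun q => ContractionAux.cmap_comm K (Δ.link G) (Δ.contraction.link Gb)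
    (Quotient.mk Δ.contractSetoid) hmk q
  have hRS := fun q => ContractionAux.cmap_out_retract (K := K) (Δ.contraction.link Gb) (Δ.link G)
    hout hmk q
  -- dimension transfer
  have hdim' : (Δ.link G).dimLT i := by
    obtain ⟨sb, hsb, hc⟩ := hdim
    refine ⟨sb.image (Quotient.out : Quotient Δ.contractSetoid → V), hout _ hsb, ?_⟩
    rw [Finset.card_image_of_injective _ Quotient.out_injective]
    exact hc
  have hRH := hΔ.2 G hGface hGne i hdim'
  cases i with
  | ofNat n =>
    intro z hz
    have h1 : ContractionAux.cmap K (Δ.contraction.link Gb) (Δ.link G) _ hout (n+1) z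
        ∈ LinearMap.ker ((Δ.link G).boundary K n) := by
      rw [LinearMap.mem_ker]
      have hc := LinearMap.congr_fun (hcommS n) z
      simp only [LinearMap.comp_apply] at hc
      rw [hc, LinearMap.mem_ker.mp hz, map_zero]
    obtain ⟨w, hw⟩ := hRH h1
    refine ⟨ContractionAux.cmap K (Δ.link G) (Δ.contraction.link Gb) _ hmk (n+2) w, ?_⟩
    have hc := LinearMap.congr_fun (hcommR (n+1)) w
    simp only [LinearMap.comp_apply] at hc
    rw [hc, hw]
    have hid := LinearMap.congr_fun (hRS (n+1)) z
    simp only [LinearMap.comp_apply, LinearMap.id_apply] at hid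
    exact hid
  | negSucc n =>
    cases n with
    | zero =>
      intro z _
      obtain ⟨w, hw⟩ := hRH (Submodule.mem_top
        (x := ContractionAux.cmap K (Δ.contraction.link Gb) (Δ.link G) _ hout 0 z))
      refine ⟨ContractionAux.cmap K (Δ.link G) (Δ.contraction.link Gb) _ hmk 1 w, ?_⟩
      have hc := LinearMap.congr_fun (hcommR 0) w
      simp only [LinearMap.comp_apply] at hc
      rw [hc, hw]
      have hid := LinearMap.congr_fun (hRS 0) z
      simp only [LinearMap.comp_apply, LinearMap.id_apply] at hid
      exact hid
    | succ m => trivial
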